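/- Let B be a 2×2 complex matrix with Σ_{i,j} |B_{ij}|² = 1. Then ( 2·|(Bᴴ B)_{01}| )² + ( 2·Σ_i |B_{ii}|² − 1 )² ≤ 1. -/

import Mathlib

open Matrix

/-- The `n = 2` case of Theorem 2: for a `2 × 2` complex matrix `B` with unit
Frobenius norm, the duality variables `x = 2|(Bᴴ B)₀₁|` and `y = 2 ∑ i |B i i|² − 1`
satisfy `x² + y² ≤ 1`. -/
theorem duality_two_path_circle (B : Matrix (Fin 2) (Fin 2) ℂ)
    (hB : ∑ i, ∑ j, ‖B i j‖ ^ 2 = 1) :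
    (2 * ‖(Bᴴ * B) 0 1‖) ^ 2 +
      (2 * (∑ i, ‖B i i‖ ^ 2) - 1) ^ 2 ≤ 1 := by
  set p := ‖B 0 0‖ with hp
  set q := ‖B 0 1‖ with hq
  set r := ‖B 1 0‖ with hr
  set s := ‖B 1 1‖ with hs
  have hent : (Bᴴ * B) 0 1 = (starRingEnd ℂ) (B 0 0) * B 0 1 +
      (starRingEnd ℂ) (B 1 0) * B 1 1 := by
    simp [Matrix.mul_apply, Fin.sum_univ_two, Matrix.conjTranspose_apply]
  have habs : ‖(Bᴴ * B) 0 1‖ ≤ p * q + r * s := by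
    rw [hent]
    refine (norm_add_le _ _).trans ?_
    simp [_root_.map_mul, hp, hq, hr, hs]
  have hsum : p ^ 2 + q ^ 2 + r ^ 2 + s ^ 2 = 1 := by
    rw [← hB]; simp [Fin.sum_univ_two]; ring
  have hdiag : (∑ i, ‖B i i‖ ^ 2) = p ^ 2 + s ^ 2 := by
    simp [Fin.sum_univ_two, hp, hs]
  rw [hdiag]
  have h0 : 0 ≤ ‖(Bᴴ * B) 0 1‖ := norm_nonneg _
  have hpq : 0 ≤ p * q + r * s := by positivity
  nlinarith [sq_nonneg (p * r - q * s), sq_nonneg (p * s - q * r),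
    sq_nonneg (p * q + r * s), mul_self_nonneg p]
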